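/- Let 𝔛 be a classical configuration in which every edge colour other than a single colour ∅ is nonempty (at most one outgoing edge of each such colour from each vertex), and let Γ_𝔛 be the graph on Γ whose edges are the nonempty-coloured pairs. If Γ_𝔛 is connected, then the number WL(𝔛) of nontrivial iterations of the Weisfeiler–Leman algorithm satisfies WL(𝔛) ≤ log₂(diam Γ_𝔛) + 3. -/

import Mathlib

universe u v

/-- The type of colours after `k` Weisfeiler-Leman iterations. -/
def WLColor (C : Type v) : ℕ → Type v
  | 0 => C
  | k + 1 => WLColor C k × (WLColor C k → WLColor C k → ℕ)

/-- The Weisfeiler-Leman iterated colouring. -/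
noncomputable def WLiter {Γ : Type u} {C : Type v} (c : Γ → Γ → C) :
    (k : ℕ) → Γ → Γ → WLColor C k
  | 0 => c
  | k + 1 => fun v₁ v₂ =>
      (WLiter c k v₁ v₂,
        fun c₁ c₂ => Nat.card {w : Γ // WLiter c k v₁ w = c₁ ∧ WLiter c k w v₂ = c₂})

/-- The number of nontrivial Weisfeiler-Leman iterations: the first `k` at which
the step `k → k+1` does not refine the partition of `Γ × Γ`. -/
noncomputable def WLnum {Γ : Type u} {C : Type v} (c : Γ → Γ → C) : ℕ :=
  sInf {k | ∀ v₁ v₂ u₁ u₂ : Γ,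
    WLiter c (k + 1) v₁ v₂ = WLiter c (k + 1) u₁ u₂ ↔
      WLiter c k v₁ v₂ = WLiter c k u₁ u₂}

/-- A colour is nonempty if each vertex has at most one outgoing edge of that colour. -/
def NonemptyColor {Γ : Type u} {C : Type v} (c : Γ → Γ → C) (c₀ : C) : Prop :=
  ∀ v w w' : Γ, c v w = c₀ → c v w' = c₀ → w = w'

/-- Existence of a directed walk of length `n`. -/
def dWalk {Γ : Type u} (R : Γ → Γ → Prop) : ℕ → Γ → Γ → Prop
  | 0, v, w => v = w
  | n + 1, v, w => ∃ u, R v u ∧ dWalk R n u w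

/-- Directed graph distance. -/
noncomputable def ddist {Γ : Type u} (R : Γ → Γ → Prop) (v w : Γ) : ℕ :=
  sInf {n | dWalk R n v w}

/-- Diameter of a directed graph. -/
noncomputable def ddiam {Γ : Type u} (R : Γ → Γ → Prop) : ℕ :=
  sSup (Set.range fun p : Γ × Γ => ddist R p.1 p.2)

/-- `ColorWalk c x y cs ws` means `ws` is the list of intermediate vertices of a walk from
`x` to `y` whose consecutive edges have the colours listed in `cs`. -/
def ColorWalk {Γ : Type u} {C : Type v} (c : Γ → Γ → C) :
    Γ → Γ → List C → List Γ → Prop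
  | x, y, [d], [] => c x y = d
  | x, y, d :: ds, u :: us => c x u = d ∧ ColorWalk c u y ds us
  | _, _, _, _ => False

section Aux

variable {Γ : Type u} {C : Type v}

/-- Coloured walks: `CWalk c ds v w` iff there is a walk from `v` to `w` whose
edge colours are the list `ds`. -/
def CWalk (c : Γ → Γ → C) : List C → Γ → Γ → Prop
  | [], v, w => v = w
  | d :: ds, v, w => ∃ x, c v x = d ∧ CWalk c ds x w

lemma cwalk_nil (c : Γ → Γ → C) (v w : Γ) : CWalk c [] v w ↔ v = w := Iff.rfl

lemma cwalk_cons (c : Γ → Γ → C) (d : C) (ds : List C) (v w : Γ) :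
    CWalk c (d :: ds) v w ↔ ∃ x, c v x = d ∧ CWalk c ds x w := Iff.rfl

lemma cwalk_append (c : Γ → Γ → C) (ds : List C) :
    ∀ (es : List C) (v w : Γ),
      CWalk c (ds ++ es) v w ↔ ∃ x, CWalk c ds v x ∧ CWalk c es x w := by
  induction ds with
  | nil => intro es v w; simp [CWalk]
  | cons d ds ih =>
      intro es v w
      simp only [List.cons_append, CWalk, List.append_eq, ih]
      constructor
      · rintro ⟨z, hz, x, h1, h2⟩; exact ⟨x, ⟨z, hz, h1⟩, h2⟩
      · rintro ⟨x, ⟨z, hz, h1⟩, h2⟩; exact ⟨z, hz, x, h1, h2⟩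

lemma cwalk_unique (c : Γ → Γ → C) :
    ∀ (ds : List C), (∀ d ∈ ds, NonemptyColor c d) →
      ∀ v x y : Γ, CWalk c ds v x → CWalk c ds v y → x = y := by
  intro ds
  induction ds with
  | nil => intro _ v x y hx hy; rw [cwalk_nil] at hx hy; rw [← hx, ← hy]
  | cons d ds ih =>
      rintro hcol v x y ⟨a, ha, hwa⟩ ⟨b, hb, hwb⟩
      have hab : a = b := hcol d List.mem_cons_self v a b ha hb
      subst hab
      exact ih (fun e he => hcol e (List.mem_cons_of_mem _ he)) a x y hwa hwb

lemma cwalk_realized (c : Γ → Γ → C) :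
    ∀ (ds : List C) (v w : Γ), CWalk c ds v w → ∀ d ∈ ds, ∃ a b : Γ, c a b = d := by
  intro ds
  induction ds with
  | nil => intro v w _ d hd; simp at hd
  | cons e ds ih =>
      rintro v w ⟨x, hx, hw⟩ d hd
      rcases List.mem_cons.mp hd with rfl | hd
      · exact ⟨v, x, hx⟩
      · exact ih x w hw d hd

lemma cwalk_reverse (c : Γ → Γ → C) (r : C → C) (hr : ∀ a b : Γ, c b a = r (c a b)) :
    ∀ (ds : List C) (v x : Γ), CWalk c ds v x → CWalk c ((ds.map r).reverse) x v := by
  intro ds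
  induction ds with
  | nil => intro v x h; rw [cwalk_nil] at h; simp only [List.map_nil, List.reverse_nil, cwalk_nil]; exact h.symm
  | cons d ds ih =>
      rintro v x ⟨z, hz, hw⟩
      have ihz := ih z x hw
      simp only [List.map_cons, List.reverse_cons]
      rw [cwalk_append]
      exact ⟨z, ihz, ⟨v, by rw [hr v z, hz], rfl⟩⟩

lemma cwalk_rev_inv (c : Γ → Γ → C) (r : C → C) (hr : ∀ a b : Γ, c b a = r (c a b))
    (ds : List C) (hrr : ∀ d ∈ ds, r (r d) = d) (x z : Γ)
    (h : CWalk c ((ds.map r).reverse) x z) : CWalk c ds z x := by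
  have h2 := cwalk_reverse c r hr _ x z h
  have heq : ((((ds.map r).reverse).map r).reverse) = ds := by
    rw [List.map_reverse, List.reverse_reverse, List.map_map]
    calc ds.map (r ∘ r) = ds.map id := List.map_congr_left (fun d hd => hrr d hd)
    _ = ds := List.map_id ds
  rwa [heq] at h2



lemma iter_succ_down (c : Γ → Γ → C) (k : ℕ) (v w u₁ u₂ : Γ)
    (h : WLiter c (k + 1) v w = WLiter c (k + 1) u₁ u₂) :
    WLiter c k v w = WLiter c k u₁ u₂ := by
  simp only [WLiter] at h
  replace h := Prod.mk.inj h
  exact h.1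

lemma iter_to_zero (c : Γ → Γ → C) :
    ∀ (k : ℕ) (v w u₁ u₂ : Γ), WLiter c k v w = WLiter c k u₁ u₂ → c v w = c u₁ u₂ := by
  intro k
  induction k with
  | zero => intro v w u₁ u₂ h; exact h
  | succ k ih => intro v w u₁ u₂ h; exact ih v w u₁ u₂ (iter_succ_down c k v w u₁ u₂ h)

lemma count_transfer (c : Γ → Γ → C) [Finite Γ] {k : ℕ} {v w u₁ u₂ : Γ}
    (h : WLiter c (k + 1) v w = WLiter c (k + 1) u₁ u₂) (x : Γ) :
    ∃ y : Γ, WLiter c k u₁ y = WLiter c k v x ∧ WLiter c k y u₂ = WLiter c k x w := by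
  simp only [WLiter] at h
  replace h := Prod.mk.inj h
  have h2 := congrFun (congrFun h.2 (WLiter c k v x)) (WLiter c k x w)
  have hpos : Nat.card {w' : Γ //
      WLiter c k v w' = WLiter c k v x ∧ WLiter c k w' w = WLiter c k x w} ≠ 0 := by
    rw [Nat.card_ne_zero]
    exact ⟨⟨⟨x, rfl, rfl⟩⟩, inferInstance⟩
  rw [h2] at hpos
  rw [Nat.card_ne_zero] at hpos
  obtain ⟨⟨y, hy1, hy2⟩⟩ := hpos.1
  exact ⟨y, hy1, hy2⟩

lemma diag_transfer (c : Γ → Γ → C) [Finite Γ]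
    (hi : ∀ (c₀ : C) (v : Γ), c v v = c₀ → ∀ v₁ v₂ : Γ, c v₁ v₂ = c₀ → v₁ = v₂)
    {g : ℕ} {v w u₁ u₂ : Γ}
    (h : WLiter c (g + 1) v w = WLiter c (g + 1) u₁ u₂) :
    WLiter c g v v = WLiter c g u₁ u₁ := by
  obtain ⟨y, hy1, hy2⟩ := count_transfer c h v
  have hy0 : c u₁ y = c v v := iter_to_zero c g u₁ y v v hy1
  have hxy : u₁ = y := hi (c v v) v rfl u₁ y hy0
  subst hxy
  exact hy1.symm

lemma walk_transfer (c : Γ → Γ → C) [Finite Γ]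
    (hi : ∀ (c₀ : C) (v : Γ), c v v = c₀ → ∀ v₁ v₂ : Γ, c v₁ v₂ = c₀ → v₁ = v₂) :
    ∀ (g : ℕ) (ds : List C), ds.length ≤ 2 ^ g → ∀ v w u₁ u₂ : Γ,
      WLiter c g v w = WLiter c g u₁ u₂ → CWalk c ds v w → CWalk c ds u₁ u₂ := by
  intro g
  induction g with
  | zero =>
    intro ds hlen v w u₁ u₂ h hw
    have h0 : c v w = c u₁ u₂ := h
    match ds, hlen with
    | [], _ =>
        rw [cwalk_nil] at hw ⊢
        subst hw
        exact hi (c v v) v rfl u₁ u₂ h0.symm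
    | [d], _ =>
        obtain ⟨x, hx, hxw⟩ := hw
        rw [cwalk_nil] at hxw
        subst hxw
        exact ⟨u₂, by rw [← h0, hx], rfl⟩
    | d :: e :: ds, hlen => simp at hlen
  | succ g ih =>
    intro ds hlen v w u₁ u₂ h hw
    by_cases hsmall : ds.length ≤ 2 ^ g
    · exact ih ds hsmall v w u₁ u₂ (iter_succ_down c g v w u₁ u₂ h) hw
    · have hds : ds = ds.take (2 ^ g) ++ ds.drop (2 ^ g) := (List.take_append_drop _ _).symm
      rw [hds] at hw ⊢
      rw [cwalk_append] at hw ⊢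
      obtain ⟨x, h1, h2⟩ := hw
      obtain ⟨y, hy1, hy2⟩ := count_transfer c h x
      refine ⟨y, ih _ ?_ v x u₁ y hy1.symm h1, ih _ ?_ x w y u₂ hy2.symm h2⟩
      · simp [List.length_take]
      · have hl : ds.length ≤ 2 ^ (g + 1) := hlen
        rw [List.length_drop]
        rw [pow_succ] at hl
        omega

lemma iter_map (c : Γ → Γ → C) [Finite Γ] (φ : Γ → Γ) (hbij : Function.Bijective φ)
    (hc : ∀ a b : Γ, c (φ a) (φ b) = c a b) :
    ∀ (k : ℕ) (a b : Γ), WLiter c k (φ a) (φ b) = WLiter c k a b := by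
  intro k
  induction k with
  | zero => exact hc
  | succ k ih =>
    intro a b
    simp only [WLiter]
    refine (Prod.mk.injEq _ _ _ _).mpr ?_
    refine ⟨ih a b, funext fun c₁ => funext fun c₂ => ?_⟩
    refine (Nat.card_congr (Equiv.subtypeEquiv (Equiv.ofBijective φ hbij) fun x => ?_)).symm
    simp only [Equiv.ofBijective_apply]
    rw [ih a x, ih x b]


end Aux

section Aux2

variable {Γ : Type u} {C : Type v}

lemma dwalk_colors (c : Γ → Γ → C) (R : Γ → Γ → Prop)
    (hR : ∀ v w : Γ, R v w ↔ NonemptyColor c (c v w)) :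
    ∀ (n : ℕ) (v w : Γ), dWalk R n v w →
      ∃ ds : List C, ds.length = n ∧ (∀ d ∈ ds, NonemptyColor c d) ∧ CWalk c ds v w := by
  intro n
  induction n with
  | zero =>
      intro v w h
      exact ⟨[], rfl, by simp, h⟩
  | succ n ih =>
      rintro v w ⟨z, hvz, hw⟩
      obtain ⟨ds, hlen, hcol, hwalk⟩ := ih z w hw
      refine ⟨c v z :: ds, by simp [hlen], ?_, ⟨z, rfl, hwalk⟩⟩
      intro d hd
      rcases List.mem_cons.mp hd with rfl | hd
      · exact (hR v z).mp hvz
      · exact hcol d hd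

lemma main_phi (c : Γ → Γ → C) [Finite Γ]
    (hi : ∀ (c₀ : C) (v : Γ), c v v = c₀ → ∀ v₁ v₂ : Γ, c v₁ v₂ = c₀ → v₁ = v₂)
    (r : C → C) (hr : ∀ a b : Γ, c b a = r (c a b))
    (R : Γ → Γ → Prop) (hR : ∀ v w : Γ, R v w ↔ NonemptyColor c (c v w))
    (hconn : ∀ v w : Γ, ∃ n : ℕ, dWalk R n v w)
    (D : ℕ) (hDd : ∀ x y : Γ, ddist R x y ≤ D)
    (g : ℕ) (hg : 2 * D + 1 ≤ 2 ^ g)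
    (v w u₁ u₂ : Γ)
    (Hd : WLiter c g v v = WLiter c g u₁ u₁)
    (Hp : WLiter c g v w = WLiter c g u₁ u₂) :
    ∃ φ : Γ → Γ, φ v = u₁ ∧ φ w = u₂ ∧ (∀ x y : Γ, c (φ x) (φ y) = c x y) ∧
      ∀ x : Γ, ∃ ds : List C, (∀ d ∈ ds, NonemptyColor c d) ∧ ds.length ≤ D ∧
        CWalk c ds v x ∧ CWalk c ds u₁ (φ x) := by
  classical
  have hdsx : ∀ x : Γ, ∃ ds : List C, ds.length = ddist R v x ∧
      (∀ d ∈ ds, NonemptyColor c d) ∧ CWalk c ds v x :=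
    fun x => dwalk_colors c R hR _ v x (Nat.sInf_mem (hconn v x))
  choose ds hlen hcol hwalk using hdsx
  have hrr : ∀ x : Γ, ∀ d ∈ ds x, r (r d) = d := by
    intro x d hd
    obtain ⟨a, b, hab⟩ := cwalk_realized c (ds x) v x (hwalk x) d hd
    rw [← hab, ← hr a b, ← hr b a]
  have hlenD : ∀ x : Γ, (ds x).length ≤ D := fun x => (hlen x) ▸ hDd v x
  have EX : ∀ x : Γ, ∃ x' : Γ, CWalk c (ds x) u₁ x' := by
    intro x
    have hcw : CWalk c (ds x ++ ((ds x).map r).reverse) v v := by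
      rw [cwalk_append]
      exact ⟨x, hwalk x, cwalk_reverse c r hr _ v x (hwalk x)⟩
    have hlen2 : (ds x ++ ((ds x).map r).reverse).length ≤ 2 ^ g := by
      have := hlenD x
      simp only [List.length_append, List.length_reverse, List.length_map]
      omega
    have htr := walk_transfer c hi g _ hlen2 v v u₁ u₁ Hd hcw
    rw [cwalk_append] at htr
    obtain ⟨x', h1, -⟩ := htr
    exact ⟨x', h1⟩
  choose φ hφ using EX
  have keyuni : ∀ x a : Γ, CWalk c (ds x) u₁ a → a = φ x := fun x a ha =>
    cwalk_unique c (ds x) (hcol x) u₁ a (φ x) ha (hφ x)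
  refine ⟨φ, ?_, ?_, ?_, fun x => ⟨ds x, hcol x, hlenD x, hwalk x, hφ x⟩⟩
  · have hvv : ddist R v v = 0 := Nat.le_zero.mp (Nat.sInf_le (show dWalk R 0 v v from rfl))
    have h0 : ds v = [] := by
      have := hlen v
      rw [hvv] at this
      exact List.eq_nil_of_length_eq_zero this
    have := hφ v
    rw [h0, cwalk_nil] at this
    exact this.symm
  · have hle : (ds w).length ≤ 2 ^ g := le_trans (le_trans (hlenD w) (by omega)) hg
    have h1 : CWalk c (ds w) u₁ u₂ := walk_transfer c hi g _ hle v w u₁ u₂ Hp (hwalk w)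
    exact (keyuni w u₂ h1).symm
  · intro x y
    have hcw : CWalk c (ds x ++ (c x y :: ((ds y).map r).reverse)) v v := by
      rw [cwalk_append]
      exact ⟨x, hwalk x, ⟨y, rfl, cwalk_reverse c r hr _ v y (hwalk y)⟩⟩
    have hlen2 : (ds x ++ (c x y :: ((ds y).map r).reverse)).length ≤ 2 ^ g := by
      have := hlenD x
      have := hlenD y
      simp only [List.length_append, List.length_cons, List.length_reverse, List.length_map]
      omega
    have htr := walk_transfer c hi g _ hlen2 v v u₁ u₁ Hd hcw
    rw [cwalk_append] at htr
    obtain ⟨a, ha, hrest⟩ := htr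
    rw [cwalk_cons] at hrest
    obtain ⟨b, hab, hb⟩ := hrest
    have hax : a = φ x := keyuni x a ha
    have hby : b = φ y := keyuni y b (cwalk_rev_inv c r hr (ds y) (hrr y) b u₁ hb)
    rw [← hax, ← hby]
    exact hab

lemma phi_inv (c : Γ → Γ → C) [Finite Γ]
    (hi : ∀ (c₀ : C) (v : Γ), c v v = c₀ → ∀ v₁ v₂ : Γ, c v₁ v₂ = c₀ → v₁ = v₂)
    (r : C → C) (hr : ∀ a b : Γ, c b a = r (c a b))
    (D g : ℕ) (hg : 2 * D + 1 ≤ 2 ^ g) (v u₁ : Γ)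
    (Hd : WLiter c g u₁ u₁ = WLiter c g v v)
    {x z p : Γ} {ds es : List C}
    (hdscol : ∀ d ∈ ds, NonemptyColor c d) (hdlen : ds.length ≤ D)
    (hescol : ∀ d ∈ es, NonemptyColor c d) (helen : es.length ≤ D)
    (hds1 : CWalk c ds u₁ p) (hds2 : CWalk c ds v x)
    (hes1 : CWalk c es u₁ p) (hes2 : CWalk c es v z) : x = z := by
  have hrr : ∀ d ∈ es, r (r d) = d := by
    intro d hd
    obtain ⟨a, b, hab⟩ := cwalk_realized c es u₁ p hes1 d hd
    rw [← hab, ← hr a b, ← hr b a]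
  have hcw : CWalk c (ds ++ (es.map r).reverse) u₁ u₁ := by
    rw [cwalk_append]
    exact ⟨p, hds1, cwalk_reverse c r hr _ u₁ p hes1⟩
  have hlen2 : (ds ++ (es.map r).reverse).length ≤ 2 ^ g := by
    simp only [List.length_append, List.length_reverse, List.length_map]
    omega
  have htr := walk_transfer c hi g _ hlen2 u₁ u₁ v v Hd hcw
  rw [cwalk_append] at htr
  obtain ⟨a, ha, hb⟩ := htr
  have hes : CWalk c es v a := cwalk_rev_inv c r hr es hrr a v hb
  have h1 : a = x := cwalk_unique c ds hdscol v a x ha hds2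
  have h2 : a = z := cwalk_unique c es hescol v a z hes hes2
  rw [← h1, h2]

end Aux2

/-- Upper bound on the number of nontrivial Weisfeiler-Leman iterations for a classical
configuration all of whose colours except possibly one distinguished colour are nonempty:
`WL(𝔛) ≤ log₂ (diam Γ_𝔛) + 3`. -/
theorem WL_upper_bound {Γ : Type u} {C : Type v} [Finite Γ] (c : Γ → Γ → C)
    (hi : ∀ (c₀ : C) (v : Γ), c v v = c₀ → ∀ v₁ v₂ : Γ, c v₁ v₂ = c₀ → v₁ = v₂)
    (hii : ∀ c₀ : C, ∃ c₀' : C, ∀ v₁ v₂ : Γ, c v₁ v₂ = c₀ → c v₂ v₁ = c₀')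
    (emp : C) (hne : ∀ c₀ : C, c₀ ≠ emp → NonemptyColor c c₀)
    (R : Γ → Γ → Prop) (hR : ∀ v w : Γ, R v w ↔ NonemptyColor c (c v w))
    (hconn : ∀ v w : Γ, ∃ n : ℕ, dWalk R n v w) :
    (WLnum c : ℝ) ≤ Real.logb 2 (ddiam R) + 3 := by
  classical
  by_cases hsub : ∀ v w : Γ, v = w
  · have hmem0 : 0 ∈ {k | ∀ v₁ v₂ u₁ u₂ : Γ,
        WLiter c (k + 1) v₁ v₂ = WLiter c (k + 1) u₁ u₂ ↔
          WLiter c k v₁ v₂ = WLiter c k u₁ u₂} := by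
      intro v₁ v₂ u₁ u₂
      rw [hsub v₁ u₁, hsub v₂ u₂]
      simp
    have h0 : WLnum c = 0 := Nat.le_zero.mp (Nat.sInf_le hmem0)
    rw [h0]
    have h3 : (0:ℝ) ≤ Real.logb 2 (ddiam R) + 3 := by
      rcases Nat.eq_zero_or_pos (ddiam R) with h | h
      · rw [h]
        norm_num
      · have h1 : (1:ℝ) ≤ (ddiam R : ℝ) := by exact_mod_cast h
        have := Real.logb_nonneg one_lt_two h1
        linarith
    exact_mod_cast h3
  · obtain ⟨v₀, hv⟩ := not_forall.mp hsub
    obtain ⟨w₀, hvw⟩ := not_forall.mp hv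
    set D := ddiam R with hDdef
    have hDd : ∀ x y : Γ, ddist R x y ≤ D := by
      intro x y
      exact le_csSup ((Set.finite_range _).bddAbove) ⟨(x, y), rfl⟩
    have hD1 : 1 ≤ D := by
      have hmemd : dWalk R (ddist R v₀ w₀) v₀ w₀ := Nat.sInf_mem (hconn v₀ w₀)
      have h1 : 1 ≤ ddist R v₀ w₀ := by
        by_contra hcon
        push_neg at hcon
        have h0 : ddist R v₀ w₀ = 0 := by omega
        rw [h0] at hmemd
        exact hvw hmemd
      exact le_trans h1 (hDd v₀ w₀)
    set g := Nat.log 2 D + 2 with hgdef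
    have hg : 2 * D + 1 ≤ 2 ^ g := by
      have hlt : D < 2 ^ (Nat.log 2 D + 1) := Nat.lt_pow_succ_log_self one_lt_two D
      have h2 : 2 ^ g = 2 ^ (Nat.log 2 D + 1) * 2 := by rw [hgdef, pow_succ]
      omega
    have hmem : (Nat.log 2 D + 3) ∈ {k | ∀ v₁ v₂ u₁ u₂ : Γ,
        WLiter c (k + 1) v₁ v₂ = WLiter c (k + 1) u₁ u₂ ↔
          WLiter c k v₁ v₂ = WLiter c k u₁ u₂} := by
      intro v₁ v₂ u₁ u₂
      constructor
      · exact iter_succ_down c _ v₁ v₂ u₁ u₂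
      · intro h
        have h' : WLiter c (g + 1) v₁ v₂ = WLiter c (g + 1) u₁ u₂ := h
        have Hd := diag_transfer c hi h'
        have Hp := iter_succ_down c g v₁ v₂ u₁ u₂ h'
        set r : C → C := fun c₀ => (hii c₀).choose with hrdef
        have hr : ∀ a b : Γ, c b a = r (c a b) := fun a b => (hii (c a b)).choose_spec a b rfl
        obtain ⟨φ, hφ1, hφ2, hφc, hφw⟩ :=
          main_phi c hi r hr R hR hconn D hDd g hg v₁ v₂ u₁ u₂ Hd Hp
        obtain ⟨ψ, hψ1, hψ2, hψc, hψw⟩ :=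
          main_phi c hi r hr R hR hconn D hDd g hg u₁ u₂ v₁ v₂ Hd.symm Hp.symm
        have hleft : ∀ x, ψ (φ x) = x := by
          intro x
          obtain ⟨ds, hdc, hdl, hd1, hd2⟩ := hφw x
          obtain ⟨es, hec, hel, he1, he2⟩ := hψw (φ x)
          exact (phi_inv c hi r hr D g hg v₁ u₁ Hd.symm hdc hdl hec hel
            hd2 hd1 he1 he2).symm
        have hright : ∀ y, φ (ψ y) = y := by
          intro y
          obtain ⟨ds, hdc, hdl, hd1, hd2⟩ := hψw y
          obtain ⟨es, hec, hel, he1, he2⟩ := hφw (ψ y)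
          exact (phi_inv c hi r hr D g hg u₁ v₁ Hd hdc hdl hec hel
            hd2 hd1 he1 he2).symm
        have hbij : Function.Bijective φ :=
          Function.bijective_iff_has_inverse.mpr ⟨ψ, hleft, hright⟩
        have hmap := iter_map c φ hbij hφc (g + 1 + 1) v₁ v₂
        rw [hφ1, hφ2] at hmap
        exact hmap.symm
    have hWL : WLnum c ≤ Nat.log 2 D + 3 := Nat.sInf_le hmem
    have hcast : (WLnum c : ℝ) ≤ (Nat.log 2 D : ℝ) + 3 := by exact_mod_cast hWL
    refine le_trans hcast ?_
    have hlogle : (Nat.log 2 D : ℝ) ≤ Real.logb 2 D := by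
      have h1 : ((2:ℝ)) ^ (Nat.log 2 D) ≤ (D : ℝ) := by
        exact_mod_cast Nat.pow_log_le_self 2 (by omega : D ≠ 0)
      have hlog2 : (0:ℝ) < Real.log 2 := Real.log_pos one_lt_two
      have h2 : Real.log ((2:ℝ) ^ (Nat.log 2 D)) ≤ Real.log (D:ℝ) :=
        Real.log_le_log (by positivity) h1
      rw [Real.log_pow] at h2
      rw [Real.logb, le_div_iff₀ hlog2]
      exact h2
    linarith
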